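/- arXiv:1705.07327 — 4 statements merged into one kernel-verified Lean document; each statement's English description precedes it below -/
import Mathlib

section
/- Let λ ≥ 1 and let G = (V, E, w) be a weighted connected graph with non-negative edge weights. Let τ and τ* be two spanning trees of G. Suppose that for every edge e of τ, every edge e' of τ* that crosses the cut induced by removing e from τ satisfies w(e') ≥ w(e)/λ. Then the total weight of τ is at most λ times the total weight of τ*. -/
open Finset SimpleGraph

open Finset SimpleGraph

/-- A connected graph on a finite vertex set has at least `card V - 1` edges. -/
lemma conn_card_le {V : Type*} [Fintype V] [DecidableEq V] (G : SimpleGraph V)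
    [Fintype G.edgeSet] (h : G.Connected) :
    Fintype.card V ≤ G.edgeFinset.card + 1 := by
  classical
  obtain ⟨r⟩ := h.nonempty
  have hpar : ∀ v : V, v ≠ r → ∃ u : V, G.Adj v u ∧ G.dist r u + 1 = G.dist r v := by
    intro v hv
    have hd : G.dist v r ≠ 0 := by
      simpa [SimpleGraph.dist_ne_zero_iff_ne_and_reachable] using ⟨hv, h v r⟩
    obtain ⟨p, hp⟩ := h.exists_walk_length_eq_dist v r
    cases p with
    | nil => exact absurd rfl hv
    | cons hadj q =>
      rename_i u
      refine ⟨u, hadj, ?_⟩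
      have h1 : G.dist r u ≤ q.length := by
        rw [SimpleGraph.dist_comm]; exact SimpleGraph.dist_le q
      have h2 : G.dist r v ≤ G.dist r u + 1 := by
        obtain ⟨q', hq'⟩ := h.exists_walk_length_eq_dist r u
        have := SimpleGraph.dist_le (q'.concat hadj.symm)
        simpa [SimpleGraph.Walk.length_concat, hq'] using this
      have h3 : q.length + 1 = G.dist r v := by
        rw [SimpleGraph.dist_comm]; simpa using hp
      omega
  choose par hpadj hpdist using hpar
  have hinj : Set.InjOn (fun v => if hv : v = r then s(r, r) else s(v, par v hv))
      ↑(Finset.univ.erase r) := by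
    intro a ha b hb hab
    simp only [Finset.coe_erase, Set.mem_diff, Finset.mem_erase] at ha hb
    have ha' : a ≠ r := by simpa using ha
    have hb' : b ≠ r := by simpa using hb
    simp only [dif_neg ha', dif_neg hb', Sym2.eq_iff] at hab
    rcases hab with ⟨h1, h2⟩ | ⟨h1, h2⟩
    · exact h1
    · have da := hpdist a ha'
      have db := hpdist b hb'
      rw [h2] at da
      rw [← h1] at db
      omega
  have hsub : ∀ v ∈ Finset.univ.erase r,
      (if hv : v = r then s(r, r) else s(v, par v hv)) ∈ G.edgeFinset := by
    intro v hv
    have hv' : v ≠ r := (Finset.mem_erase.mp hv).1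
    rw [dif_neg hv']
    simpa using (hpadj v hv')
  have := Finset.card_le_card_of_injOn _ hsub hinj
  have hcard : (Finset.univ.erase r).card = Fintype.card V - 1 := by
    simp [Finset.card_erase_of_mem]
  have hne : Nonempty V := ⟨r⟩
  have : 1 ≤ Fintype.card V := Fintype.card_pos
  omega

lemma reach_delete_of_forall {V : Type*} {G : SimpleGraph V} (hG : G.IsTree)
    (S : Set (Sym2 V)) {c d : V}
    (h : ∀ e ∈ S, (G.deleteEdges {e}).Reachable c d) :
    (G.deleteEdges S).Reachable c d := by
  classical
  obtain ⟨p0⟩ := hG.isConnected c d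
  set p := p0.toPath with hpdef
  have hp : ∀ f ∈ (p : G.Walk c d).edges, f ∉ S := by
    intro f hf hfS
    obtain ⟨q0⟩ := h f hfS
    set q := q0.toPath with hqdef
    have hq : ∀ e ∈ (q : (G.deleteEdges {f}).Walk c d).edges, e ∈ G.edgeSet := by
      intro e he
      have := (q : (G.deleteEdges {f}).Walk c d).edges_subset_edgeSet he
      rw [SimpleGraph.edgeSet_deleteEdges] at this
      exact this.1
    have hfq : f ∉ ((q : (G.deleteEdges {f}).Walk c d).transfer G hq).edges := by
      rw [SimpleGraph.Walk.edges_transfer]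
      intro hmem
      have := (q : (G.deleteEdges {f}).Walk c d).edges_subset_edgeSet hmem
      rw [SimpleGraph.edgeSet_deleteEdges] at this
      exact this.2 rfl
    have hqp : ((q : (G.deleteEdges {f}).Walk c d).transfer G hq).IsPath :=
      q.isPath.transfer hq
    have := hG.IsAcyclic.path_unique p ⟨_, hqp⟩
    rw [this] at hf
    exact hfq hf
  exact ⟨(p : G.Walk c d).toDeleteEdges S hp⟩

lemma W_connected {V : Type*} {τ τs : SimpleGraph V} (hτ : τ.IsTree) (hτs : τs.Connected)
    (S : Set (Sym2 V)) (N : Set (Sym2 V))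
    (hN : ∀ c d : V, τs.Adj c d → (∃ e ∈ S, ¬(τ.deleteEdges {e}).Reachable c d) →
      s(c, d) ∈ N) :
    (τ.deleteEdges S ⊔ SimpleGraph.fromEdgeSet N).Connected := by
  rw [SimpleGraph.connected_iff]
  refine ⟨fun c d => ?_, hτs.nonempty⟩
  obtain ⟨p⟩ := hτs c d
  induction p with
  | nil => exact SimpleGraph.Reachable.refl _
  | cons hadj q ih =>
    rename_i a b c'
    refine SimpleGraph.Reachable.trans ?_ ih
    by_cases hx : ∃ e ∈ S, ¬(τ.deleteEdges {e}).Reachable a b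
    · exact SimpleGraph.Adj.reachable (Or.inr ⟨hN a b hadj hx, hadj.ne⟩ :
        (τ.deleteEdges S ⊔ SimpleGraph.fromEdgeSet N).Adj a b)
    · push_neg at hx
      exact (reach_delete_of_forall hτ S hx).mono le_sup_left

/-- If every edge of the spanning tree τ* crossing the cut induced by
removing an edge e from the spanning tree τ has weight at least w(e)/λ, then
w(τ) ≤ λ · w(τ*). -/
theorem stmt0 {V : Type*} [Fintype V] [DecidableEq V]
    (G : SimpleGraph V) (w : Sym2 V → ℝ) (lam : ℝ) (hlam : 1 ≤ lam)
    (hw : ∀ e, 0 ≤ w e) (hG : G.Connected)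
    (τ τs : SimpleGraph V) [DecidableRel τ.Adj] [DecidableRel τs.Adj]
    (hτG : τ ≤ G) (hτsG : τs ≤ G)
    (hτ : τ.IsTree) (hτs : τs.IsTree)
    (hcut : ∀ a b : V, τ.Adj a b → ∀ c d : V, τs.Adj c d →
      ¬ (τ.deleteEdges {s(a, b)}).Reachable c d →
      w s(a, b) / lam ≤ w s(c, d)) :
    ∑ e ∈ τ.edgeFinset, w e ≤ lam * ∑ e ∈ τs.edgeFinset, w e := by
  classical
  have hlam0 : (0 : ℝ) < lam := lt_of_lt_of_le one_pos hlam
  set t : {e // e ∈ τ.edgeFinset} → Finset (Sym2 V) := fun e =>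
    τs.edgeFinset.filter
      (fun e' => ∃ c d : V, e' = s(c, d) ∧ ¬(τ.deleteEdges {e.val}).Reachable c d) with ht
  have hall : ∀ s : Finset {e // e ∈ τ.edgeFinset}, s.card ≤ (s.biUnion t).card := by
    intro s
    set S : Finset (Sym2 V) := s.image Subtype.val with hS
    set N : Finset (Sym2 V) := s.biUnion t with hNdef
    set W := τ.deleteEdges ↑S ⊔ SimpleGraph.fromEdgeSet ↑N with hWdef
    have hW : W.Connected := by
      apply W_connected hτ hτs.isConnected
      rintro c d hcd ⟨e, heS, hre⟩
      obtain ⟨x, hx, rfl⟩ := Finset.mem_image.mp heS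
      refine Finset.mem_coe.mpr (Finset.mem_biUnion.mpr ⟨x, hx, ?_⟩)
      exact Finset.mem_filter.mpr ⟨SimpleGraph.mem_edgeFinset.mpr hcd, ⟨c, d, rfl, hre⟩⟩
    letI : Fintype W.edgeSet := Fintype.ofFinite _
    have hcount := conn_card_le W hW
    have hsub : W.edgeFinset ⊆ (τ.edgeFinset \ S) ∪ N := by
      intro e he
      rw [SimpleGraph.mem_edgeFinset, hWdef, SimpleGraph.edgeSet_sup,
        SimpleGraph.edgeSet_deleteEdges, SimpleGraph.edgeSet_fromEdgeSet] at he
      rcases he with ⟨heτ, heS⟩ | ⟨heN, _⟩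
      · exact Finset.mem_union_left _ (Finset.mem_sdiff.mpr
          ⟨SimpleGraph.mem_edgeFinset.mpr heτ, by simpa using heS⟩)
      · exact Finset.mem_union_right _ (by simpa using heN)
    have h1 : W.edgeFinset.card ≤ (τ.edgeFinset \ S).card + N.card :=
      le_trans (Finset.card_le_card hsub) (Finset.card_union_le _ _)
    have hSsub : S ⊆ τ.edgeFinset := by
      intro e he
      obtain ⟨x, _, rfl⟩ := Finset.mem_image.mp he
      exact x.2
    have h2 : (τ.edgeFinset \ S).card = τ.edgeFinset.card - S.card :=
      Finset.card_sdiff_of_subset hSsub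
    have h3 : S.card = s.card := Finset.card_image_of_injective s Subtype.val_injective
    have h4 : τ.edgeFinset.card + 1 = Fintype.card V := hτ.card_edgeFinset
    have h5 : S.card ≤ τ.edgeFinset.card := Finset.card_le_card hSsub
    omega
  obtain ⟨f, hfinj, hft⟩ := (Finset.all_card_le_biUnion_card_iff_exists_injective t).mp hall
  have hmem : ∀ x, f x ∈ τs.edgeFinset := fun x => (Finset.mem_filter.mp (hft x)).1
  have key : ∀ x : {e // e ∈ τ.edgeFinset}, w x.val ≤ lam * w (f x) := by
    intro x
    obtain ⟨c, d, hcd, hre⟩ := (Finset.mem_filter.mp (hft x)).2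
    have hadjcd : τs.Adj c d := by
      have := hmem x
      rw [hcd] at this
      simpa using this
    obtain ⟨e, hx⟩ := x
    induction e using Sym2.inductionOn with
    | hf a b =>
      have hab : τ.Adj a b := by simpa using hx
      have := hcut a b hab c d hadjcd hre
      rw [div_le_iff₀ hlam0] at this
      calc w s(a, b) ≤ w s(c, d) * lam := this
        _ = lam * w (f ⟨s(a, b), hx⟩) := by rw [hcd]; ring
  calc ∑ e ∈ τ.edgeFinset, w e = ∑ x ∈ τ.edgeFinset.attach, w x.val :=
        (Finset.sum_attach _ _).symm
    _ ≤ ∑ x ∈ τ.edgeFinset.attach, lam * w (f x) :=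
        Finset.sum_le_sum (fun x _ => key x)
    _ = lam * ∑ x ∈ τ.edgeFinset.attach, w (f x) := by rw [Finset.mul_sum]
    _ = lam * ∑ e ∈ τ.edgeFinset.attach.image f, w e := by
        rw [Finset.sum_image (fun x _ y _ h => hfinj h)]
    _ ≤ lam * ∑ e ∈ τs.edgeFinset, w e := by
        apply mul_le_mul_of_nonneg_left _ (le_of_lt hlam0)
        apply Finset.sum_le_sum_of_subset_of_nonneg
        · intro e he
          obtain ⟨x, _, rfl⟩ := Finset.mem_image.mp he
          exact hmem x
        · exact fun e _ _ => hw e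
end

section
/- Let λ ≥ 1, G a weighted connected graph with non-negative edge weights, and τ, τ* two spanning trees of G satisfying: for every edge e of τ, every edge of τ* crossing the cut induced by removing e from τ has weight at least w(e)/λ. Then w(τ \ τ*) ≤ λ · w(τ* \ τ), where for an edge set F, w(F) denotes the sum of weights of edges in F. -/
open SimpleGraph

private lemma preconnected_of_adj {V : Type*} {G H : SimpleGraph V}
    (hG : G.Preconnected) (h : ∀ a b, G.Adj a b → H.Reachable a b) : H.Preconnected := by
  intro u v
  obtain ⟨p⟩ := hG u v
  induction p with
  | nil => exact Reachable.refl _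
  | cons ha _ ih => exact (h _ _ ha).trans ih

private lemma exists_spanning_tree_aux {V : Type*} [Fintype V] (n : ℕ) :
    ∀ (H : SimpleGraph V) [Fintype H.edgeSet], H.edgeFinset.card = n → H.Connected →
      ∃ T, T ≤ H ∧ T.IsTree := by
  classical
  induction n using Nat.strong_induction_on with
  | _ n ih =>
    intro H _ hcard hconn
    by_cases hac : H.IsAcyclic
    · exact ⟨H, le_refl H, hconn, hac⟩
    · simp only [SimpleGraph.IsAcyclic, not_forall, not_not] at hac
      obtain ⟨v, c, hc⟩ := hac
      obtain ⟨e, he⟩ : ∃ e, e ∈ c.edges := by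
        have h3 := hc.three_le_length
        cases hec : c.edges with
        | nil =>
          have : c.edges.length = c.length := SimpleGraph.Walk.length_edges c
          rw [hec] at this
          simp at this
          omega
        | cons a l => exact ⟨a, by simp [hec]⟩
      induction e using Sym2.ind with
      | _ a b =>
      have hrw := (SimpleGraph.adj_and_reachable_delete_edges_iff_exists_cycle).mpr ⟨v, c, hc, he⟩
      have hconn' : (H.deleteEdges {s(a,b)}).Connected := by
        haveI : Nonempty V := hconn.nonempty
        refine ⟨preconnected_of_adj hconn.preconnected ?_⟩
        intro x y hxy
        by_cases hxy' : s(x, y) = s(a, b)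
        · rw [Sym2.eq_iff] at hxy'
          rcases hxy' with ⟨rfl, rfl⟩ | ⟨rfl, rfl⟩
          · exact hrw.2
          · exact hrw.2.symm
        · exact SimpleGraph.Adj.reachable (by simp [hxy, hxy'])
      have hsub : (H.deleteEdges {s(a,b)}).edgeFinset = H.edgeFinset.erase s(a,b) := by
        ext f
        simp only [SimpleGraph.mem_edgeFinset, SimpleGraph.edgeSet_deleteEdges,
          Set.mem_diff, Set.mem_singleton_iff, Finset.mem_erase, SimpleGraph.mem_edgeFinset]
        tauto
      have hlt : (H.deleteEdges {s(a,b)}).edgeFinset.card < n := by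
        rw [hsub, ← hcard]
        exact Finset.card_erase_lt_of_mem
          (by rw [SimpleGraph.mem_edgeFinset]; exact c.edges_subset_edgeSet he)
      obtain ⟨T, hT1, hT2⟩ := ih _ hlt (H.deleteEdges {s(a,b)}) rfl hconn'
      exact ⟨T, le_trans hT1 (SimpleGraph.deleteEdges_le _), hT2⟩

private lemma card_edge_of_connected {V : Type*} [Fintype V] (H : SimpleGraph V)
    [Fintype H.edgeSet] (h : H.Connected) : Fintype.card V - 1 ≤ H.edgeFinset.card := by
  classical
  obtain ⟨T, hT1, hT2⟩ := exists_spanning_tree_aux H.edgeFinset.card H rfl h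
  have h1 : T.edgeFinset.card + 1 = Fintype.card V := hT2.card_edgeFinset
  have h2 : T.edgeFinset.card ≤ H.edgeFinset.card :=
    Finset.card_le_card (SimpleGraph.edgeFinset_mono hT1)
  omega

/-- Under the same cut condition as Statement 0,
w(τ \ τ*) ≤ λ · w(τ* \ τ). -/
theorem stmt1 {V : Type*} [Fintype V] [DecidableEq V]
    (G : SimpleGraph V) (w : Sym2 V → ℝ) (lam : ℝ) (hlam : 1 ≤ lam)
    (hw : ∀ e, 0 ≤ w e) (hG : G.Connected)
    (τ τs : SimpleGraph V) [DecidableRel τ.Adj] [DecidableRel τs.Adj]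
    (hτG : τ ≤ G) (hτsG : τs ≤ G)
    (hτ : τ.IsTree) (hτs : τs.IsTree)
    (hcut : ∀ a b : V, τ.Adj a b → ∀ c d : V, τs.Adj c d →
      ¬ (τ.deleteEdges {s(a, b)}).Reachable c d →
      w s(a, b) / lam ≤ w s(c, d)) :
    ∑ e ∈ τ.edgeFinset \ τs.edgeFinset, w e ≤
      lam * ∑ e ∈ τs.edgeFinset \ τ.edgeFinset, w e := by
  classical
  have hlam0 : (0:ℝ) < lam := lt_of_lt_of_le one_pos hlam
  set A := τ.edgeFinset \ τs.edgeFinset with hA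
  set B := τs.edgeFinset \ τ.edgeFinset with hB
  let N : Sym2 V → Finset (Sym2 V) := fun e =>
    B.filter (fun f => Sym2.lift ⟨fun c d => ¬ (τ.deleteEdges {e}).Reachable c d,
      fun c d => by simp [SimpleGraph.reachable_comm]⟩ f)
  have hNB : ∀ e, N e ⊆ B := fun e => Finset.filter_subset _ _
  -- Hall condition
  have hall : ∀ S : Finset (Sym2 V), S ⊆ A → S.card ≤ (S.biUnion N).card := by
    intro S hS
    have hSτ : S ⊆ τ.edgeFinset := hS.trans Finset.sdiff_subset
    set C := S.biUnion N with hC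
    set H : SimpleGraph V := SimpleGraph.fromEdgeSet (↑((τ.edgeFinset \ S) ∪ C)) with hH
    have hdel : τ.deleteEdges ↑S ≤ H := by
      intro x y hxy
      rw [SimpleGraph.deleteEdges_adj] at hxy
      refine (SimpleGraph.fromEdgeSet_adj _).mpr ⟨?_, hxy.1.ne⟩
      rw [Finset.mem_coe, Finset.mem_union, Finset.mem_sdiff, SimpleGraph.mem_edgeFinset]
      exact Or.inl ⟨hxy.1, hxy.2⟩
    have hHconn : H.Connected := by
      haveI : Nonempty V := hG.nonempty
      refine ⟨preconnected_of_adj hτs.isConnected.preconnected ?_⟩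
      intro c d hcd
      have hcdE : s(c,d) ∈ τs.edgeFinset := by
        rw [SimpleGraph.mem_edgeFinset]; exact hcd
      by_cases hmem : s(c, d) ∈ τ.edgeFinset
      · refine SimpleGraph.Adj.reachable ((SimpleGraph.fromEdgeSet_adj _).mpr ⟨?_, hcd.ne⟩)
        have hnotS : s(c,d) ∉ S := by
          intro hctr
          exact (Finset.mem_sdiff.mp (hS hctr)).2 hcdE
        rw [Finset.mem_coe, Finset.mem_union, Finset.mem_sdiff]
        exact Or.inl ⟨hmem, hnotS⟩
      · by_cases hex : ∃ e ∈ S, ¬ (τ.deleteEdges {e}).Reachable c d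
        · obtain ⟨e, heS, hcr⟩ := hex
          refine SimpleGraph.Adj.reachable ((SimpleGraph.fromEdgeSet_adj _).mpr ⟨?_, hcd.ne⟩)
          rw [Finset.mem_coe, Finset.mem_union]
          refine Or.inr (Finset.mem_biUnion.mpr ⟨e, heS, Finset.mem_filter.mpr
            ⟨Finset.mem_sdiff.mpr ⟨hcdE, hmem⟩, by simpa using hcr⟩⟩)
        · push_neg at hex
          obtain ⟨p⟩ := hτ.isConnected.preconnected c d
          have hq : ∀ f ∈ (p.toPath : τ.Walk c d).edges, f ∉ (↑S : Set (Sym2 V)) := by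
            intro f hf hfS
            rw [Finset.mem_coe] at hfS
            obtain ⟨r⟩ := hex f hfS
            have hrE : ∀ g ∈ r.edges, g ∈ τ.edgeSet := by
              intro g hg
              have := r.edges_subset_edgeSet hg
              rw [SimpleGraph.edgeSet_deleteEdges] at this
              exact this.1
            have huniq := hτ.IsAcyclic.path_unique p.toPath (r.transfer τ hrE).toPath
            have hfr : f ∈ (r.transfer τ hrE).edges := by
              apply SimpleGraph.Walk.edges_toPath_subset
              rw [← huniq]
              exact hf
            rw [SimpleGraph.Walk.edges_transfer] at hfr
            have := r.edges_subset_edgeSet hfr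
            rw [SimpleGraph.edgeSet_deleteEdges] at this
            exact this.2 rfl
          exact SimpleGraph.Reachable.mono hdel
            ⟨(p.toPath : τ.Walk c d).toDeleteEdges ↑S hq⟩
    have h1 := card_edge_of_connected H hHconn
    have h2 : H.edgeFinset ⊆ (τ.edgeFinset \ S) ∪ C := by
      intro f hf
      rw [SimpleGraph.mem_edgeFinset, hH, SimpleGraph.edgeSet_fromEdgeSet] at hf
      exact Finset.mem_coe.mp hf.1
    have h3 : H.edgeFinset.card ≤ (τ.edgeFinset \ S).card + C.card :=
      le_trans (Finset.card_le_card h2) (Finset.card_union_le _ _)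
    have h4 : (τ.edgeFinset \ S).card = τ.edgeFinset.card - S.card := Finset.card_sdiff_of_subset hSτ
    have h5 : S.card ≤ τ.edgeFinset.card := Finset.card_le_card hSτ
    have h6 : τ.edgeFinset.card + 1 = Fintype.card V := hτ.card_edgeFinset
    have h7 : 1 ≤ Fintype.card V := Fintype.card_pos_iff.mpr hG.nonempty
    omega
  -- Hall's theorem
  have hHall : ∀ s : Finset {x : Sym2 V // x ∈ A}, s.card ≤ (s.biUnion fun e => N e.1).card := by
    intro s
    have h2 : (s.image Subtype.val).biUnion N = s.biUnion fun e => N e.1 := by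
      ext x
      simp [Finset.mem_biUnion]
    have h3 : s.image Subtype.val ⊆ A := by
      intro x hx
      rw [Finset.mem_image] at hx
      obtain ⟨e, _, rfl⟩ := hx
      exact e.2
    calc s.card = (s.image Subtype.val).card :=
          (Finset.card_image_of_injective _ Subtype.val_injective).symm
      _ ≤ ((s.image Subtype.val).biUnion N).card := hall _ h3
      _ = _ := by rw [h2]
  obtain ⟨F, hFinj, hFmem⟩ := (Finset.all_card_le_biUnion_card_iff_exists_injective _).mp hHall
  -- pointwise bound
  have key : ∀ x y : Sym2 V, x ∈ τ.edgeSet → y ∈ τs.edgeSet →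
      (Sym2.lift ⟨fun c d => ¬ (τ.deleteEdges {x}).Reachable c d,
        fun c d => by simp [SimpleGraph.reachable_comm]⟩ y) → w x ≤ lam * w y := by
    intro x y
    induction x using Sym2.ind with
    | _ a b =>
    induction y using Sym2.ind with
    | _ c d =>
    intro hx hy hcr
    rw [Sym2.lift_mk] at hcr
    have h := hcut a b hx c d hy hcr
    rw [div_le_iff₀ hlam0] at h
    linarith
  have key2 : ∀ e : {x : Sym2 V // x ∈ A}, w e.1 ≤ lam * w (F e) := by
    intro e
    have hfe := hFmem e
    have h1 : F e ∈ B := hNB _ hfe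
    have hcr := (Finset.mem_filter.mp hfe).2
    have hx : e.1 ∈ τ.edgeSet :=
      SimpleGraph.mem_edgeFinset.mp (Finset.mem_sdiff.mp e.2).1
    have hy : F e ∈ τs.edgeSet :=
      SimpleGraph.mem_edgeFinset.mp (Finset.mem_sdiff.mp h1).1
    exact key _ _ hx hy hcr
  calc ∑ e ∈ A, w e = ∑ e : {x : Sym2 V // x ∈ A}, w e.1 := (Finset.sum_coe_sort A w).symm
    _ ≤ ∑ e : {x : Sym2 V // x ∈ A}, lam * w (F e) :=
        Finset.sum_le_sum (fun e _ => key2 e)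
    _ = lam * ∑ e : {x : Sym2 V // x ∈ A}, w (F e) := by rw [← Finset.mul_sum]
    _ ≤ lam * ∑ f ∈ B, w f := by
        refine mul_le_mul_of_nonneg_left ?_ (le_of_lt hlam0)
        have himg : ∑ f ∈ Finset.univ.image F, w f = ∑ e : {x : Sym2 V // x ∈ A}, w (F e) :=
          Finset.sum_image (fun x _ y _ h => hFinj h)
        rw [← himg]
        refine Finset.sum_le_sum_of_subset_of_nonneg ?_ (fun f _ _ => hw f)
        intro f hf
        rw [Finset.mem_image] at hf
        obtain ⟨e, _, rfl⟩ := hf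
        exact hNB _ (hFmem e)
end

section
/- Consider a hierarchical block partition of the index set {0, ..., |R|−1} on an HST T of height h, where n(ℓ) denotes the number of blocks at level ℓ, and where consecutive requests in different level-ℓ blocks but in the same level-(ℓ+1) block are at HST distance exactly δ(ℓ+1). Then the total Arrow cost, defined as the sum over i of d_T(v_{i−1}, v_i), equals Σ_{ℓ=0}^{h−1} (n(ℓ) − n(ℓ+1)) · δ(ℓ+1). -/
/-- Given a hierarchical block partition of the request indices
{0,...,k−1} on a 2-HST of height h (B ℓ i is the level-ℓ block of index i;
the level-ℓ partition refines the level-(ℓ+1) partition, blocks are convex sets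
of consecutive indices, n ℓ is the number of level-ℓ blocks, all indices lie in
one level-h block), where consecutive requests in different level-ℓ blocks but
the same level-(ℓ+1) block are at distance exactly δ(ℓ+1) and consecutive
requests in the same level-0 block are at distance 0, the total Arrow cost
Σ_i d(v_{i},v_{i+1}) equals Σ_{ℓ=0}^{h−1} (n(ℓ) − n(ℓ+1))·δ(ℓ+1). -/
theorem stmt10 {V : Type*} [MetricSpace V] (h k : ℕ) (hk : 0 < k)
    (v : ℕ → V) (δ : ℕ → ℝ) (hδ : ∀ ℓ, δ ℓ = 2 ^ (ℓ + 1) - 2)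
    (B : ℕ → ℕ → ℕ) (n : ℕ → ℕ)
    (hrefine : ∀ ℓ i j, B ℓ i = B ℓ j → B (ℓ + 1) i = B (ℓ + 1) j)
    (hconvex : ∀ ℓ i j m, i ≤ j → j ≤ m → B ℓ i = B ℓ m → B ℓ i = B ℓ j)
    (hn : ∀ ℓ, ℓ ≤ h → n ℓ = ((Finset.range k).image (B ℓ)).card)
    (htop : ∀ i j, i < k → j < k → B h i = B h j)
    (hd0 : ∀ i, i + 1 < k → B 0 i = B 0 (i + 1) → dist (v i) (v (i + 1)) = 0)
    (hdist : ∀ ℓ i, ℓ < h → i + 1 < k → B ℓ i ≠ B ℓ (i + 1) →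
      B (ℓ + 1) i = B (ℓ + 1) (i + 1) → dist (v i) (v (i + 1)) = δ (ℓ + 1)) :
    ∑ i ∈ Finset.range (k - 1), dist (v i) (v (i + 1)) =
      ∑ ℓ ∈ Finset.range h, ((n ℓ : ℝ) - (n (ℓ + 1) : ℝ)) * δ (ℓ + 1) := by
  classical
  set P : ℕ → ℕ → Prop := fun ℓ i => B ℓ i ≠ B ℓ (i + 1) with hP
  -- non-boundary propagates upward
  have hup : ∀ ℓ ℓ' i, ℓ ≤ ℓ' → ¬ P ℓ i → ¬ P ℓ' i := by
    intro ℓ ℓ' i hle hnp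
    induction ℓ', hle using Nat.le_induction with
    | base => exact hnp
    | succ m hm ih =>
      intro hc
      exact hc (hrefine m i (i + 1) (not_ne_iff.mp ih))
  -- counting lemma
  have hcount : ∀ ℓ, ℓ ≤ h →
      n ℓ = ((Finset.range (k - 1)).filter (fun i => P ℓ i)).card + 1 := by
    intro ℓ hℓ
    rw [hn ℓ hℓ]
    set S := insert (k - 1) ((Finset.range (k - 1)).filter (fun i => P ℓ i)) with hS
    have hSsub : S ⊆ Finset.range k := by
      intro i hi
      rw [hS, Finset.mem_insert] at hi
      rcases hi with rfl | hi
      · exact Finset.mem_range.mpr (by omega)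
      · have := Finset.mem_range.mp (Finset.mem_of_mem_filter i hi)
        exact Finset.mem_range.mpr (by omega)
    have himg : (Finset.range k).image (B ℓ) = S.image (B ℓ) := by
      apply Finset.Subset.antisymm
      · intro b hb
        simp only [Finset.mem_image, Finset.mem_range] at hb
        obtain ⟨m, hm, rfl⟩ := hb
        set T := (Finset.range k).filter (fun j => B ℓ j = B ℓ m) with hT
        have hTne : T.Nonempty := ⟨m, by simp [hT, hm]⟩
        set i := T.max' hTne with hi
        have hiT : i ∈ T := T.max'_mem hTne
        rw [hT, Finset.mem_filter, Finset.mem_range] at hiT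
        refine Finset.mem_image.mpr ⟨i, ?_, hiT.2⟩
        by_cases hie : i = k - 1
        · rw [hS, hie]; exact Finset.mem_insert_self _ _
        · have hik1 : i + 1 < k := by omega
          have hne : B ℓ (i + 1) ≠ B ℓ m := by
            intro hc
            have : i + 1 ∈ T := by
              rw [hT, Finset.mem_filter, Finset.mem_range]; exact ⟨hik1, hc⟩
            have := T.le_max' _ this
            omega
          rw [hS]
          apply Finset.mem_insert_of_mem
          rw [Finset.mem_filter, Finset.mem_range]
          refine ⟨by omega, ?_⟩
          intro hc
          exact hne (hc ▸ hiT.2)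
      · exact Finset.image_subset_image hSsub
    have key : ∀ i j, i ∈ S → j ∈ S → i < j → B ℓ i ≠ B ℓ j := by
      intro i j hi hj hlt heq
      have hjk : j ≤ k - 1 := by
        rw [hS, Finset.mem_insert] at hj
        rcases hj with rfl | hj
        · exact le_rfl
        · have := Finset.mem_range.mp (Finset.mem_of_mem_filter j hj)
          omega
      have hik1 : i < k - 1 := by omega
      have hiP : P ℓ i := by
        rw [hS, Finset.mem_insert] at hi
        rcases hi with rfl | hi
        · omega
        · exact (Finset.mem_filter.mp hi).2
      exact hiP (hconvex ℓ i (i + 1) j (by omega) (by omega) heq)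
    have hinj : Set.InjOn (B ℓ) ↑S := by
      intro i hi j hj hij
      by_contra hne
      rcases lt_or_gt_of_ne hne with hlt | hlt
      · exact key i j (by simpa using hi) (by simpa using hj) hlt hij
      · exact key j i (by simpa using hj) (by simpa using hi) hlt hij.symm
    rw [himg, Finset.card_image_of_injOn hinj, hS,
      Finset.card_insert_of_notMem (by simp)]
  -- pointwise distance identity
  have hk1 : ∀ i ∈ Finset.range (k - 1), dist (v i) (v (i + 1)) =
      ∑ ℓ ∈ Finset.range h, (if P ℓ i ∧ ¬ P (ℓ + 1) i then δ (ℓ + 1) else 0) := by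
    intro i hi
    rw [Finset.mem_range] at hi
    have hik : i + 1 < k := by omega
    have hPh : ¬ P h i := fun hc => hc (htop i (i + 1) (by omega) hik)
    by_cases h0 : P 0 i
    · have hex : ∃ ℓ, ¬ P ℓ i := ⟨h, hPh⟩
      set L := Nat.find hex with hL
      have hLspec : ¬ P L i := Nat.find_spec hex
      have hLh : L ≤ h := Nat.find_le hPh
      have hL1 : 1 ≤ L := by
        rcases Nat.eq_zero_or_pos L with h' | h'
        · exact absurd h0 (h' ▸ hLspec)
        · exact h'
      have hh0 : h ≠ 0 := fun e => hPh (e ▸ h0)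
      have hlt : ∀ ℓ, ℓ < L → P ℓ i := fun ℓ hℓ => not_not.mp (Nat.find_min hex hℓ)
      have hh1 : L - 1 < h := by omega
      rw [Finset.sum_eq_single (L - 1)]
      · have hc1 : P (L - 1) i := hlt _ (by omega)
        have hc2 : ¬ P (L - 1 + 1) i := by rw [Nat.sub_add_cancel hL1]; exact hLspec
        rw [if_pos ⟨hc1, hc2⟩]
        exact hdist (L - 1) i hh1 hik hc1 (not_ne_iff.mp hc2)
      · intro b _ hbne
        rw [if_neg]
        rintro ⟨hb1, hb2⟩
        rcases lt_or_ge b (L - 1) with hb | hb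
        · exact hb2 (hlt _ (by omega))
        · exact hup L b i (by omega) hLspec hb1
      · intro hnot
        exact absurd (Finset.mem_range.mpr hh1) hnot
    · have hall : ∀ ℓ, ¬ P ℓ i := fun ℓ => hup 0 ℓ i (Nat.zero_le _) h0
      rw [hd0 i hik (not_ne_iff.mp h0)]
      symm
      apply Finset.sum_eq_zero
      intro ℓ _
      rw [if_neg]
      rintro ⟨hc, _⟩
      exact hall ℓ hc
  rw [Finset.sum_congr rfl hk1, Finset.sum_comm]
  apply Finset.sum_congr rfl
  intro ℓ hℓ
  rw [Finset.mem_range] at hℓ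
  have hsub : (Finset.range (k - 1)).filter (fun i => P (ℓ + 1) i) ⊆
      (Finset.range (k - 1)).filter (fun i => P ℓ i) := by
    intro i hi
    rw [Finset.mem_filter] at hi ⊢
    refine ⟨hi.1, ?_⟩
    by_contra hc
    exact hup ℓ (ℓ + 1) i (by omega) (fun hp => hp hc) hi.2
  have hdiff : (Finset.range (k - 1)).filter (fun i => P ℓ i ∧ ¬ P (ℓ + 1) i) =
      (Finset.range (k - 1)).filter (fun i => P ℓ i) \
        (Finset.range (k - 1)).filter (fun i => P (ℓ + 1) i) := by
    ext i
    simp only [Finset.mem_filter, Finset.mem_sdiff, Finset.mem_range]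
    tauto
  have hcardle := Finset.card_le_card hsub
  rw [← Finset.sum_filter, Finset.sum_const, hdiff, Finset.card_sdiff_of_subset hsub,
    hcount ℓ (by omega), hcount (ℓ + 1) (by omega)]
  rw [nsmul_eq_mul, Nat.cast_sub hcardle]
  push_cast
  ring
end

section
/- Let π be an ordering of requests located at leaves of an HST T and let S be the local-successor spanning tree built from π (each i joined to next(i), the earliest later request at minimum HST distance). Then for every subtree T' of T, the subgraph of S induced by the requests at leaves of T' is connected. -/
/-- On an HST (leaf set with symmetric ultrametric LCA-level
function, distances δ(lca) with δ(ℓ) = 2^{ℓ+1} − 2), the local-successor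
spanning tree built from an ordering (each position i joined to nxt i, the
earliest later position at minimum HST distance) induces a connected subgraph
on the set of requests lying in any fixed level-ℓ subtree (the set of leaves at
LCA-level ≤ ℓ from a reference leaf u₀). -/
theorem stmt16 {L : Type*} (lca : L → L → ℕ) (δ : ℕ → ℝ)
    (hδ : ∀ ℓ, δ ℓ = 2 ^ (ℓ + 1) - 2)
    (hsymm : ∀ u w, lca u w = lca w u)
    (hself : ∀ u, lca u u = 0)
    (hultra : ∀ u w z, lca u z ≤ max (lca u w) (lca w z))
    (k : ℕ) (v : Fin (k + 1) → L) (nxt : Fin (k + 1) → Fin (k + 1))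
    (h1 : ∀ i : Fin (k + 1), i.val < k → i < nxt i)
    (h2 : ∀ i j : Fin (k + 1), i.val < k → i < j →
      δ (lca (v i) (v (nxt i))) ≤ δ (lca (v i) (v j)))
    (h3 : ∀ i j : Fin (k + 1), i.val < k → i < j → j < nxt i →
      δ (lca (v i) (v (nxt i))) < δ (lca (v i) (v j)))
    (u₀ : L) (ℓ : ℕ) (S : Set (Fin (k + 1)))
    (hS : S = {i | lca (v i) u₀ ≤ ℓ}) (hne : S.Nonempty) :
    ((SimpleGraph.fromEdgeSet
      {e : Sym2 (Fin (k + 1)) | ∃ i : Fin (k + 1), i.val < k ∧ e = s(i, nxt i)}).induce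
        S).Connected := by
  have hmono : StrictMono δ := by
    intro a b hab
    rw [hδ, hδ]
    have : (2:ℝ) ^ (a+1) < 2 ^ (b+1) := by
      apply pow_lt_pow_right₀ one_lt_two (by omega)
    linarith
  obtain ⟨m, hmS, hm⟩ := Set.Finite.exists_maximalFor id S S.toFinite hne
  have hmax : ∀ j ∈ S, j ≤ m := by
    intro j hj
    by_contra h
    push_neg at h
    exact absurd (hm hj h.le) (not_le.mpr h)
  have hclosure : ∀ i ∈ S, i < m → nxt i ∈ S ∧ i < nxt i := by
    intro i hiS him
    have hik : i.val < k := by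
      have := m.isLt; have := him; omega
    refine ⟨?_, h1 i hik⟩
    rw [hS] at hiS hmS ⊢
    have h1' : lca (v i) (v m) ≤ ℓ := by
      have := hultra (v i) u₀ (v m)
      rw [hsymm u₀ (v m)] at this
      exact this.trans (max_le hiS hmS)
    have h2' : δ (lca (v i) (v (nxt i))) ≤ δ ℓ :=
      (h2 i m hik him).trans (hmono.monotone h1')
    have h3' : lca (v i) (v (nxt i)) ≤ ℓ := by
      by_contra hc
      push_neg at hc
      exact absurd h2' (not_le.mpr (hmono hc))
    have := hultra (v (nxt i)) (v i) u₀
    rw [hsymm (v (nxt i)) (v i)] at this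
    exact this.trans (max_le h3' hiS)
  set G := ((SimpleGraph.fromEdgeSet
      {e : Sym2 (Fin (k + 1)) | ∃ i : Fin (k + 1), i.val < k ∧ e = s(i, nxt i)}).induce
        S) with hG
  have key : ∀ n : ℕ, ∀ i : Fin (k+1), ∀ hi : i ∈ S, m.val - i.val ≤ n →
      G.Reachable ⟨i, hi⟩ ⟨m, hmS⟩ := by
    intro n
    induction n with
    | zero =>
      intro i hi hle
      have : i = m := by
        have := hmax i hi
        exact Fin.le_antisymm this (by omega)
      subst this
      rfl
    | succ n ih =>
      intro i hi hle
      rcases eq_or_lt_of_le (hmax i hi) with heq | hlt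
      · subst heq; rfl
      · obtain ⟨hnS, hin⟩ := hclosure i hi hlt
        have hik : i.val < k := by have := m.isLt; omega
        have hadj : G.Adj ⟨i, hi⟩ ⟨nxt i, hnS⟩ := by
          simp only [hG, SimpleGraph.induce, SimpleGraph.comap_adj,
            Function.Embedding.coe_subtype, SimpleGraph.fromEdgeSet_adj, Set.mem_setOf_eq]
          exact ⟨⟨i, hik, rfl⟩, Fin.ne_of_lt hin⟩
        have hrest : G.Reachable ⟨nxt i, hnS⟩ ⟨m, hmS⟩ := by
          apply ih
          have := hmax _ hnS
          have : (nxt i).val ≤ m.val := this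
          omega
        exact hadj.reachable.trans hrest
  have : Nonempty S := ⟨⟨hne.choose, hne.choose_spec⟩⟩
  exact ⟨fun a b => (key _ a.1 a.2 le_rfl).trans (key _ b.1 b.2 le_rfl).symm⟩
end
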